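/- Suppose N ≥ 3 and for a.e. x_N in a subset B ⊆ Λ of positive measure there is γ(x_N) > 0 with P(·, x_N) ≥ γ(x_N) P_{(N-1)} a.e. on Λ^{N-1}. Then for a.e. x_{N-1} ∈ B, P_{(N-1)}(·, x_{N-1}) ≥ γ(x_{N-1}) P_{(N-2)} a.e. on Λ^{N-2}. -/

import Mathlib

open MeasureTheory

/-- Lemma 11: let `N = n + 2 ≥ 3` and let `P` be a symmetric probability density on
`Λ^N` with `P > 0` a.e. If for a.e. `x_N` in a set `B ⊆ Λ` of positive measure there
is `γ(x_N) > 0` with `P(·, x_N) ≥ γ(x_N) P_{(N-1)}` a.e. on `Λ^{N-1}`, then for a.e.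
`x_{N-1} ∈ B`, `P_{(N-1)}(·, x_{N-1}) ≥ γ(x_{N-1}) P_{(N-2)}` a.e. on `Λ^{N-2}`. -/
theorem reduction_density_lower_bound {Λ : Type*} [MeasurableSpace Λ] (μ : Measure Λ)
    [SigmaFinite μ] [μ.IsComplete] (n : ℕ) (hn : 1 ≤ n)
    (P : (Fin (n + 2) → Λ) → ℝ) (hPmeas : Measurable P)
    (hPpos : ∀ᵐ x ∂(Measure.pi fun _ : Fin (n + 2) => μ), 0 < P x)
    (hPsym : ∀ σ : Equiv.Perm (Fin (n + 2)), ∀ x, P (x ∘ σ) = P x)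
    (hPint : Integrable P (Measure.pi fun _ : Fin (n + 2) => μ))
    (hPone : ∫ x, P x ∂(Measure.pi fun _ : Fin (n + 2) => μ) = 1)
    (P1 : (Fin (n + 1) → Λ) → ℝ) (hP1 : ∀ y, P1 y = ∫ t, P (Fin.snoc y t) ∂μ)
    (P2 : (Fin n → Λ) → ℝ) (hP2 : ∀ y, P2 y = ∫ t, P1 (Fin.snoc y t) ∂μ)
    (B : Set Λ) (hB : MeasurableSet B) (hBpos : 0 < μ B)
    (γ : Λ → ℝ)
    (hγ : ∀ᵐ t ∂(μ.restrict B), 0 < γ t ∧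
      ∀ᵐ y ∂(Measure.pi fun _ : Fin (n + 1) => μ), γ t * P1 y ≤ P (Fin.snoc y t)) :
    ∀ᵐ t ∂(μ.restrict B),
      ∀ᵐ y ∂(Measure.pi fun _ : Fin n => μ), γ t * P2 y ≤ P1 (Fin.snoc y t) := by
  classical
  set ν2 := Measure.pi fun _ : Fin (n + 2) => μ with hν2def
  set ν1 := Measure.pi fun _ : Fin (n + 1) => μ with hν1def
  set ν0 := Measure.pi fun _ : Fin n => μ with hν0def
  have he2 : MeasurePreserving
      (MeasurableEquiv.piFinSuccAbove (fun _ : Fin (n + 2) => Λ) (Fin.last (n + 1)))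
      ν2 (μ.prod ν1) := measurePreserving_piFinSuccAbove (fun _ => μ) _
  have he1 : MeasurePreserving
      (MeasurableEquiv.piFinSuccAbove (fun _ : Fin (n + 1) => Λ) (Fin.last n))
      ν1 (μ.prod ν0) := measurePreserving_piFinSuccAbove (fun _ => μ) _
  have he2s : ∀ p : Λ × (Fin (n + 1) → Λ),
      (MeasurableEquiv.piFinSuccAbove (fun _ : Fin (n + 2) => Λ) (Fin.last (n + 1))).symm p
        = Fin.snoc p.2 p.1 := by
    intro p; simp [MeasurableEquiv.piFinSuccAbove_symm_apply, Fin.snocEquiv]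
  have he1s : ∀ p : Λ × (Fin n → Λ),
      (MeasurableEquiv.piFinSuccAbove (fun _ : Fin (n + 1) => Λ) (Fin.last n)).symm p
        = Fin.snoc p.2 p.1 := by
    intro p; simp [MeasurableEquiv.piFinSuccAbove_symm_apply, Fin.snocEquiv]
  -- symmetry of `P` in its last two coordinates
  have hswap : ∀ (y : Fin n → Λ) (s t : Λ),
      P (Fin.snoc (Fin.snoc y s) t) = P (Fin.snoc (Fin.snoc y t) s) := by
    intro y s t
    have hc : (Fin.snoc (Fin.snoc y s) t : Fin (n + 2) → Λ) ∘
        (Equiv.swap (Fin.last (n + 1)) ((Fin.last n).castSucc))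
        = Fin.snoc (Fin.snoc y t) s := by
      funext i
      induction i using Fin.lastCases with
      | last => simp [Equiv.swap_apply_left]
      | cast j =>
        induction j using Fin.lastCases with
        | last => simp [Equiv.swap_apply_right]
        | cast k =>
          rw [Function.comp_apply, Equiv.swap_apply_of_ne_of_ne]
          · simp
          · intro h; have := congrArg Fin.val h; simp at this; omega
          · intro h; have := congrArg Fin.val h; simp at this; omega
    rw [← hc]
    exact (hPsym _ _).symm
  -- integrability of `P` along slices in the last coordinate
  have hint2 : Integrable (fun p : Λ × (Fin (n + 1) → Λ) => P (Fin.snoc p.2 p.1))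
      (μ.prod ν1) := by
    have h := ((he2.symm _).integrable_comp_emb
      (MeasurableEquiv.measurableEmbedding _) (g := P)).mpr hPint
    simpa only [Function.comp_def, he2s] using h
  have hint_t : ∀ᵐ t ∂μ, Integrable (fun z => P (Fin.snoc z t)) ν1 :=
    hint2.prod_right_ae
  -- a.e. nonnegativity of `P1`
  have hpos2 : ∀ᵐ p ∂(μ.prod ν1), 0 < P (Fin.snoc p.2 p.1) := by
    have h := (he2.symm _).quasiMeasurePreserving.ae hPpos
    filter_upwards [h] with p hp
    rwa [he2s p] at hp
  have hpos_swap : ∀ᵐ q ∂(ν1.prod μ), 0 < P (Fin.snoc q.1 q.2) :=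
    (Measure.measurePreserving_swap).quasiMeasurePreserving.ae hpos2
  have hP1nn : ∀ᵐ z ∂ν1, 0 ≤ P1 z := by
    filter_upwards [Measure.ae_ae_of_ae_prod hpos_swap] with z hz
    rw [hP1]
    exact integral_nonneg_of_ae (hz.mono fun t ht => ht.le)
  -- main argument
  filter_upwards [hγ, hint_t.filter_mono (ae_mono Measure.restrict_le_self)] with t ht hintt
  obtain ⟨hγpos, hγle⟩ := ht
  have H : ∀ᵐ z ∂ν1, 0 ≤ P1 z ∧ γ t * P1 z ≤ P (Fin.snoc z t) := hP1nn.and hγle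
  have H2 : ∀ᵐ p ∂(μ.prod ν0), 0 ≤ P1 (Fin.snoc p.2 p.1) ∧
      γ t * P1 (Fin.snoc p.2 p.1) ≤ P (Fin.snoc (Fin.snoc p.2 p.1) t) := by
    have h := (he1.symm _).quasiMeasurePreserving.ae H
    filter_upwards [h] with p hp
    rwa [he1s p] at hp
  have H3 : ∀ᵐ q ∂(ν0.prod μ), 0 ≤ P1 (Fin.snoc q.1 q.2) ∧
      γ t * P1 (Fin.snoc q.1 q.2) ≤ P (Fin.snoc (Fin.snoc q.1 q.2) t) :=
    (Measure.measurePreserving_swap).quasiMeasurePreserving.ae H2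
  have H4 := Measure.ae_ae_of_ae_prod H3
  -- integrability of the slice on `Λ^{n+1}` in the next-to-last coordinate
  have hi2 : Integrable (fun p : Λ × (Fin n → Λ) => P (Fin.snoc (Fin.snoc p.2 p.1) t))
      (μ.prod ν0) := by
    have h := ((he1.symm _).integrable_comp_emb
      (MeasurableEquiv.measurableEmbedding _) (g := fun z => P (Fin.snoc z t))).mpr hintt
    simpa only [Function.comp_def, he1s] using h
  have hi4 := hi2.prod_left_ae
  filter_upwards [H4, hi4] with y hy hyint
  have key : γ t * P2 y ≤ ∫ s, P (Fin.snoc (Fin.snoc y s) t) ∂μ := by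
    rw [hP2, ← integral_const_mul]
    refine integral_mono_of_nonneg ?_ hyint ?_
    · filter_upwards [hy] with s hs
      exact mul_nonneg hγpos.le hs.1
    · filter_upwards [hy] with s hs
      exact hs.2
  calc γ t * P2 y ≤ ∫ s, P (Fin.snoc (Fin.snoc y s) t) ∂μ := key
    _ = ∫ s, P (Fin.snoc (Fin.snoc y t) s) ∂μ := by simp_rw [hswap]
    _ = P1 (Fin.snoc y t) := (hP1 _).symm
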